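/- Let p be a prime, S a finite p-group, and A a group of automorphisms of S of order coprime to p. Suppose A stabilizes a normal series 1 = S₀ ≤ S₁ ≤ ⋯ ≤ Sₙ = S (each Sᵢ normal in S and A-invariant) and acts trivially on each factor S_{i+1}/S_i. Then A = 1. -/
import Mathlib


/-- Let `p` be a prime, `S` a finite `p`-group, and `A` a group of automorphisms of `S`
of order coprime to `p`.  Suppose `A` stabilizes a normal series
`1 = S₀ ≤ S₁ ≤ ⋯ ≤ Sₙ = S` and acts trivially on each factor `S_{i+1}/S_i`.
Then `A = 1`. -/
theorem stmt_0 (p : ℕ) (hp : p.Prime) (S : Type*) [Group S] [Finite S]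
    (hS : IsPGroup p S) (A : Subgroup (MulAut S))
    (hA : (Nat.card A).Coprime p)
    (n : ℕ) (ser : Fin (n + 1) → Subgroup S)
    (h0 : ser 0 = ⊥) (hn : ser (Fin.last n) = ⊤)
    (hmono : Monotone ser)
    (hnormal : ∀ i, (ser i).Normal)
    (hinv : ∀ a : MulAut S, a ∈ A → ∀ i, (ser i).map a.toMonoidHom = ser i)
    (htriv : ∀ a : MulAut S, a ∈ A → ∀ i : Fin n, ∀ s ∈ ser i.succ,
      s⁻¹ * a s ∈ ser i.castSucc) :
    A = ⊥ := by
  rw [Subgroup.eq_bot_iff_forall]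
  intro a ha
  set m := orderOf (⟨a, ha⟩ : A) with hm
  have hmdvd : m ∣ Nat.card A := orderOf_dvd_natCard _
  have hmcop : m.Coprime p := Nat.Coprime.coprime_dvd_left hmdvd hA
  have ham : a ^ m = 1 := by
    have : ((⟨a, ha⟩ : A) : MulAut S) ^ m = ((1 : A) : MulAut S) := by
      norm_cast
      exact pow_orderOf_eq_one _
    simpa using this
  -- key induction: a fixes each ser i pointwise
  have key : ∀ i : ℕ, ∀ hi : i ≤ n, ∀ s ∈ ser ⟨i, Nat.lt_succ_of_le hi⟩, a s = s := by
    intro i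
    induction i with
    | zero =>
      intro hi s hs
      have : (⟨0, Nat.lt_succ_of_le hi⟩ : Fin (n+1)) = 0 := rfl
      rw [this, h0] at hs
      simp [Subgroup.mem_bot.mp hs]
    | succ i ih =>
      intro hi s hs
      have hin : i < n := hi
      have hc : s⁻¹ * a s ∈ ser (⟨i, hin⟩ : Fin n).castSucc := by
        apply htriv a ha ⟨i, hin⟩ s
        have : (⟨i, hin⟩ : Fin n).succ = ⟨i + 1, Nat.lt_succ_of_le hi⟩ := rfl
        rw [this]; exact hs
      set c := s⁻¹ * a s with hcdef
      have hcmem : c ∈ ser ⟨i, Nat.lt_succ_of_le (Nat.le_of_lt hin)⟩ := hc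
      have hac : a c = c := ih (Nat.le_of_lt hin) c hcmem
      have hpow : ∀ k : ℕ, (a ^ k) s = s * c ^ k := by
        intro k
        induction k with
        | zero => simp
        | succ k ihk =>
          have : (a ^ (k+1)) s = a ((a ^ k) s) := by
            rw [pow_succ']
            rfl
          rw [this, ihk, map_mul, map_pow, hac]
          have has : a s = s * c := by
            rw [hcdef]; group
          rw [has]
          group
      have hcm : c ^ m = 1 := by
        have := hpow m
        rw [ham] at this
        simp at this
        exact this
      -- c has p-power order
      obtain ⟨k, hk⟩ := hS c
      have h1 : orderOf c ∣ m := orderOf_dvd_of_pow_eq_one hcm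
      have h2 : orderOf c ∣ p ^ k := orderOf_dvd_of_pow_eq_one hk
      have : orderOf c ∣ Nat.gcd m (p ^ k) := Nat.dvd_gcd h1 h2
      rw [Nat.Coprime.gcd_eq_one (hmcop.pow_right k)] at this
      have hc1 : c = 1 := orderOf_eq_one_iff.mp (Nat.eq_one_of_dvd_one this)
      have : a s = s * c := by rw [hcdef]; group
      rw [this, hc1, mul_one]
  -- conclude a = 1
  ext s
  have hs : s ∈ ser (Fin.last n) := by rw [hn]; trivial
  have : a s = s := key n le_rfl s hs
  simpa using this
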